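/- Let $(a_n)$ be a sequence in a semigroup such that $FS(a_n)$ is infinite. Then there exists a bijective (injective) sequence $(b_n)$ with $FS(b_n) \subseteq FS(a_n)$; that is, every infinite set of the form $FS(a_n)$ is a proper IP set. -/

import Mathlib

/-- The ordered sum `a_{i_1} + ⋯ + a_{i_m}` over a finite index set
`F = {i_1 < ⋯ < i_m}` (junk value `a 0` if `F = ∅`). -/
def ordsum {S : Type*} [AddSemigroup S] (a : ℕ → S) (F : Finset ℕ) : S :=
  match F.sort (· ≤ ·) with
  | [] => a 0
  | i :: l => l.foldl (fun s j => s + a j) (a i)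

/-- `F < G`: every element of `F` is smaller than every element of `G`. -/
def FinsetLT (F G : Finset ℕ) : Prop := ∀ i ∈ F, ∀ j ∈ G, i < j

/-- `FS(a_1, a_2, …)`: the set of all finite ordered sums of the sequence `a`. -/
def FSset {S : Type*} [AddSemigroup S] (a : ℕ → S) : Set S :=
  {s | ∃ F : Finset ℕ, F.Nonempty ∧ ordsum a F = s}

/-- `FS(a_n, a_{n+1}, …)`: finite ordered sums with all indices `≥ n`. -/
def FStail {S : Type*} [AddSemigroup S] (a : ℕ → S) (n : ℕ) : Set S :=
  {s | ∃ F : Finset ℕ, F.Nonempty ∧ (∀ i ∈ F, n ≤ i) ∧ ordsum a F = s}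

/-- A sequence is proper if `a_{F₁} ≠ a_{F₂}` whenever `F₁ < F₂`. -/
def IsProperSeq {S : Type*} [AddSemigroup S] (a : ℕ → S) : Prop :=
  ∀ F G : Finset ℕ, F.Nonempty → G.Nonempty → FinsetLT F G →
    ordsum a F ≠ ordsum a G

/-- `b` is a sumsequence of `a`: `b_k = a_{F_k}` for finite index sets `F₁ < F₂ < ⋯`. -/
def IsSumseq {S : Type*} [AddSemigroup S] (a b : ℕ → S) : Prop :=
  ∃ F : ℕ → Finset ℕ, (∀ k, (F k).Nonempty) ∧
    (∀ k, FinsetLT (F k) (F (k + 1))) ∧ (∀ k, b k = ordsum a (F k))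


section Lemmas
variable {S : Type*} [AddSemigroup S] (a : ℕ → S)

lemma foldl_add_shift (s t : S) (l : List ℕ) :
    l.foldl (fun u j => u + a j) (s + t) = s + l.foldl (fun u j => u + a j) t := by
  induction l generalizing t with
  | nil => rfl
  | cons i l ih => simp only [List.foldl_cons, add_assoc, ih]

lemma ordsum_sort_eq (F : Finset ℕ) (i : ℕ) (l : List ℕ)
    (h : F.sort (· ≤ ·) = i :: l) : ordsum a F = l.foldl (fun s j => s + a j) (a i) := by
  unfold ordsum; rw [h]

lemma exists_sort_cons (F : Finset ℕ) (hF : F.Nonempty) :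
    ∃ i l, F.sort (· ≤ ·) = i :: l := by
  have hne : F.sort (· ≤ ·) ≠ [] := by
    intro he
    have h2 := Finset.length_sort (α := ℕ) (· ≤ ·) (s := F)
    rw [he] at h2
    simp only [List.length_nil] at h2
    exact hF.ne_empty (Finset.card_eq_zero.mp h2.symm)
  exact List.exists_cons_of_ne_nil hne

lemma sort_union (F G : Finset ℕ) (h : FinsetLT F G) :
    (F ∪ G).sort (· ≤ ·) = F.sort (· ≤ ·) ++ G.sort (· ≤ ·) := by
  have hd : Disjoint F G := by
    rw [Finset.disjoint_left]
    intro i hiF hiG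
    exact absurd (h i hiF i hiG) (lt_irrefl i)
  refine (fun hp hs => List.Perm.eq_of_pairwise' (Finset.pairwise_sort _ _) hs hp) ?_ ?_
  · rw [← Multiset.coe_eq_coe, Finset.sort_eq]
    rw [← Finset.disjUnion_eq_union F G hd]
    show F.val + G.val = _
    rw [← Finset.sort_eq F (· ≤ ·), ← Finset.sort_eq G (· ≤ ·)]
    rfl
  · rw [List.pairwise_append]
    refine ⟨Finset.pairwise_sort _ _, Finset.pairwise_sort _ _, ?_⟩
    intro x hx y hy
    exact (h x ((Finset.mem_sort _).1 hx) y ((Finset.mem_sort _).1 hy)).le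

lemma ordsum_union (F G : Finset ℕ) (hF : F.Nonempty) (hG : G.Nonempty)
    (h : FinsetLT F G) : ordsum a (F ∪ G) = ordsum a F + ordsum a G := by
  obtain ⟨i, l, hil⟩ := exists_sort_cons F hF
  obtain ⟨j, m, hjm⟩ := exists_sort_cons G hG
  have hu : (F ∪ G).sort (· ≤ ·) = i :: (l ++ j :: m) := by
    rw [sort_union F G h, hil, hjm]; rfl
  rw [ordsum_sort_eq a _ _ _ hu, ordsum_sort_eq a _ _ _ hil, ordsum_sort_eq a _ _ _ hjm]
  rw [List.foldl_append, List.foldl_cons, foldl_add_shift]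

end Lemmas

section L2
variable {S : Type*} [AddSemigroup S] (a : ℕ → S)

lemma ordsum_singleton (m : ℕ) : ordsum a {m} = a m := by
  rw [ordsum_sort_eq a _ _ _ (Finset.sort_singleton _ m)]; rfl

lemma ordsum_biUnion (F : ℕ → Finset ℕ) (hne : ∀ k, (F k).Nonempty)
    (hlt : ∀ k l, k < l → FinsetLT (F k) (F l)) (b : ℕ → S)
    (hb : ∀ k, b k = ordsum a (F k)) (G : Finset ℕ) (hG : G.Nonempty) :
    ordsum b G = ordsum a (G.biUnion F) := by
  induction G using Finset.strongInduction with
  | _ G ih =>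
    set m := G.max' hG with hm
    have hmG : m ∈ G := G.max'_mem hG
    have hGe : G = G.erase m ∪ {m} := by
      ext x; simp only [Finset.mem_union, Finset.mem_erase, Finset.mem_singleton]
      constructor
      · intro hx; by_cases hxm : x = m
        · exact Or.inr hxm
        · exact Or.inl ⟨hxm, hx⟩
      · rintro (⟨_, hx⟩ | rfl) <;> [exact hx; exact hmG]
    by_cases he : (G.erase m).Nonempty
    · have hLT : FinsetLT (G.erase m) {m} := by
        intro i hi j hj
        rw [Finset.mem_singleton] at hj; subst hj
        exact lt_of_le_of_ne (G.le_max' i (Finset.mem_erase.1 hi).2) (Finset.mem_erase.1 hi).1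
      have h1 : ordsum b G = ordsum b (G.erase m) + b m := by
        conv_lhs => rw [hGe]
        rw [ordsum_union b (G.erase m) {m} he ⟨m, Finset.mem_singleton_self m⟩ hLT,
          ordsum_singleton]
      have h2 : ordsum b (G.erase m) = ordsum a ((G.erase m).biUnion F) :=
        ih (G.erase m) (Finset.erase_ssubset hmG) he
      have hBLT : FinsetLT ((G.erase m).biUnion F) (F m) := by
        intro i hi j hj
        obtain ⟨k, hk, hik⟩ := Finset.mem_biUnion.1 hi
        exact hlt k m (lt_of_le_of_ne (G.le_max' k (Finset.mem_erase.1 hk).2)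
          (Finset.mem_erase.1 hk).1) i hik j hj
      have hBne : ((G.erase m).biUnion F).Nonempty := by
        obtain ⟨k, hk⟩ := he
        obtain ⟨i, hi⟩ := hne k
        exact ⟨i, Finset.mem_biUnion.2 ⟨k, hk, hi⟩⟩
      have hset : G.biUnion F = (G.erase m).biUnion F ∪ F m := by
        conv_lhs => rw [hGe]
        ext x
        simp only [Finset.mem_biUnion, Finset.mem_union, Finset.mem_singleton]
        constructor
        · rintro ⟨k, hk | rfl, hx⟩
          · exact Or.inl ⟨k, hk, hx⟩
          · exact Or.inr hx
        · rintro (⟨k, hk, hx⟩ | hx)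
          · exact ⟨k, Or.inl hk, hx⟩
          · exact ⟨m, Or.inr rfl, hx⟩
      rw [h1, h2, hb m, ← ordsum_union a _ _ hBne (hne m) hBLT, hset]
    · have hGm : G = {m} := by
        rw [hGe]
        rw [Finset.not_nonempty_iff_eq_empty.1 he, Finset.empty_union]
      rw [hGm, ordsum_singleton, hb m]
      congr 1
      rw [Finset.singleton_biUnion]

end L2

section L3
variable {S : Type*} [AddSemigroup S] (a : ℕ → S)

lemma FStail_infinite (h : (FSset a).Infinite) (n : ℕ) : (FStail a n).Infinite := by
  by_contra hfin
  rw [Set.not_infinite] at hfin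
  apply h
  have hPfin : ({F : Finset ℕ | F ⊆ Finset.range n} : Set (Finset ℕ)).Finite := by
    apply Set.Finite.ofFinset (Finset.range n).powerset
    intro F; simp [Finset.mem_powerset]
  have hAfin : (ordsum a '' {F : Finset ℕ | F ⊆ Finset.range n}).Finite := hPfin.image _
  have hsub : FSset a ⊆ (ordsum a '' {F : Finset ℕ | F ⊆ Finset.range n}) ∪ FStail a n ∪
      Set.image2 (· + ·) (ordsum a '' {F : Finset ℕ | F ⊆ Finset.range n}) (FStail a n) := by
    rintro s ⟨F, hFne, rfl⟩
    set F₁ := F.filter (fun i => i < n) with hF1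
    set F₂ := F.filter (fun i => ¬ i < n) with hF2
    have hFu : F₁ ∪ F₂ = F := Finset.filter_union_filter_not_eq _ F
    have hLT : FinsetLT F₁ F₂ := by
      intro i hi j hj
      have hi' := (Finset.mem_filter.1 hi).2
      have hj' := (Finset.mem_filter.1 hj).2
      omega
    have hF1sub : F₁ ⊆ Finset.range n := by
      intro i hi; rw [Finset.mem_range]; exact (Finset.mem_filter.1 hi).2
    have hF2ge : ∀ i ∈ F₂, n ≤ i := by
      intro i hi; have := (Finset.mem_filter.1 hi).2; omega
    by_cases h1 : F₁.Nonempty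
    · by_cases h2 : F₂.Nonempty
      · refine Or.inr (Set.mem_image2.2 ⟨ordsum a F₁, ⟨F₁, hF1sub, rfl⟩,
          ordsum a F₂, ⟨F₂, h2, hF2ge, rfl⟩, ?_⟩)
        rw [← hFu, ordsum_union a _ _ h1 h2 hLT]
      · have : F = F₁ := by
          rw [← hFu, Finset.not_nonempty_iff_eq_empty.1 h2, Finset.union_empty]
        exact Or.inl (Or.inl ⟨F, by rw [this]; exact hF1sub, rfl⟩)
    · have : F = F₂ := by
        rw [← hFu, Finset.not_nonempty_iff_eq_empty.1 h1, Finset.empty_union]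
      exact Or.inl (Or.inr ⟨F, hFne, by rw [this] at hFne ⊢; exact hF2ge, rfl⟩)
  exact ((hAfin.union hfin).union (hAfin.image2 _ hfin)).subset hsub

lemma exists_block (h : (FSset a).Infinite) (n : ℕ) (used : List S) :
    ∃ F : Finset ℕ, F.Nonempty ∧ (∀ i ∈ F, n ≤ i) ∧ ordsum a F ∉ used := by
  have hinf := (FStail_infinite a h n).diff (used.finite_toSet)
  obtain ⟨s, hs1, hs2⟩ := hinf.nonempty
  obtain ⟨F, h1, h2, h3⟩ := hs1
  exact ⟨F, h1, h2, by rw [h3]; exact hs2⟩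

end L3

noncomputable def blockSeq {S : Type*} [AddSemigroup S] (a : ℕ → S)
    (pick : ℕ → List S → Finset ℕ) : ℕ → Finset ℕ × ℕ × List S
  | 0 =>
    let F := pick 0 []
    (F, F.sup id + 1, [ordsum a F])
  | k + 1 =>
    let p := blockSeq a pick k
    let F := pick p.2.1 p.2.2
    (F, F.sup id + 1, ordsum a F :: p.2.2)

theorem stmt1 {S : Type*} [AddSemigroup S] (a : ℕ → S) (h : (FSset a).Infinite) :
    ∃ b : ℕ → S, Function.Injective b ∧ FSset b ⊆ FSset a := by
  choose pick hne hge hnot using exists_block a h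
  set seq := blockSeq a pick with hseq
  set F : ℕ → Finset ℕ := fun k => (seq k).1 with hF
  have hFs : ∀ k, F (k + 1) = pick (seq k).2.1 (seq k).2.2 := fun k => rfl
  have hbound : ∀ k, (seq k).2.1 = (F k).sup id + 1 := by
    intro k; cases k <;> rfl
  have hused0 : (seq 0).2.2 = [ordsum a (F 0)] := rfl
  have husedS : ∀ k, (seq (k + 1)).2.2 = ordsum a (F (k + 1)) :: (seq k).2.2 := fun k => rfl
  have hFne : ∀ k, (F k).Nonempty := by
    intro k; cases k
    · exact hne 0 []
    · exact hne _ _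
  have hcons : ∀ k, FinsetLT (F k) (F (k + 1)) := by
    intro k i hi j hj
    have hj' : (seq k).2.1 ≤ j := hge _ _ j (by rwa [← hFs k])
    rw [hbound k] at hj'
    have : i ≤ (F k).sup id := Finset.le_sup (f := id) hi
    omega
  have hlt : ∀ k l, k < l → FinsetLT (F k) (F l) := by
    intro k l hkl
    induction l with
    | zero => omega
    | succ m ih =>
      rcases Nat.lt_succ_iff_lt_or_eq.1 hkl with hkm | rfl
      · intro i hi j hj
        obtain ⟨t, ht⟩ := hFne m
        exact lt_trans (ih hkm i hi t ht) (hcons m t ht j hj)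
      · exact hcons k
  set b : ℕ → S := fun k => ordsum a (F k) with hb
  have hmem : ∀ k j, j ≤ k → b j ∈ (seq k).2.2 := by
    intro k
    induction k with
    | zero => intro j hj; rw [Nat.le_zero.1 hj, hused0]; exact List.mem_singleton.2 rfl
    | succ m ih =>
      intro j hj
      rw [husedS m]
      rcases Nat.le_succ_iff_eq_or_le.1 hj with rfl | hjm
      · exact List.mem_cons_self
      · exact List.mem_cons_of_mem _ (ih j hjm)
  have hinj : Function.Injective b := by
    have key : ∀ j k, j < k → b j ≠ b k := by
      intro j k hjk
      obtain ⟨m, rfl⟩ := Nat.exists_eq_add_of_lt hjk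
      intro heq
      have h1 : b j ∈ (seq (j + m)).2.2 := hmem (j + m) j (Nat.le_add_right j m)
      have h2 : ordsum a (F (j + m + 1)) ∉ (seq (j + m)).2.2 := by
        rw [hFs (j + m)]; exact hnot _ _
      rw [heq] at h1
      exact h2 h1
    intro x y hxy
    by_contra hne'
    rcases lt_or_gt_of_ne hne' with hlt' | hlt'
    · exact key x y hlt' hxy
    · exact key y x hlt' hxy.symm
  refine ⟨b, hinj, ?_⟩
  rintro s ⟨G, hG, rfl⟩
  refine ⟨G.biUnion F, ?_, (ordsum_biUnion a F hFne hlt b (fun k => rfl) G hG).symm⟩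
  obtain ⟨k, hk⟩ := hG
  obtain ⟨i, hi⟩ := hFne k
  exact ⟨i, Finset.mem_biUnion.2 ⟨k, hk, hi⟩⟩
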